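/- For every α > 0 and all real x and y, the function I^{(α)}(x,y) := (1/(4π^{3/2})) ∫_{−∞}^{+∞} exp( (1/12)(1−iu)³ − (1/2)(x+y)(1−iu) − (1/4)(x−y)²/(1−iu) ) / (1−iu)^{α+1/2} du satisfies (1/(x−y))·(∂/∂y − ∂/∂x) I^{(α)}(x,y) = I^{(α+1)}(x,y) for x ≠ y. -/

import Mathlib

open Complex

/-- `I^{(α)}(x,y) = (1/(4π^{3/2})) ∫_ℝ exp((1/12)(1−iu)³ − (1/2)(x+y)(1−iu)
    − (1/4)(x−y)²/(1−iu)) / (1−iu)^{α+1/2} du`, with principal-branch powers. -/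
noncomputable def Ifun (α : ℝ) (x y : ℝ) : ℂ :=
  (1 / (4 * (Real.pi : ℂ) ^ ((3 : ℂ) / 2))) *
    ∫ u : ℝ, Complex.exp ((1 / 12) * (1 - Complex.I * u) ^ 3
        - (1 / 2) * ((x : ℂ) + y) * (1 - Complex.I * u)
        - (1 / 4) * ((x : ℂ) - y) ^ 2 / (1 - Complex.I * u))
      / (1 - Complex.I * u) ^ ((α : ℂ) + 1 / 2)

noncomputable def zc (u : ℝ) : ℂ := 1 - Complex.I * u

lemma zc_re (u : ℝ) : (zc u).re = 1 := by simp [zc]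
lemma zc_ne (u : ℝ) : zc u ≠ 0 := by
  intro h
  have := congrArg Complex.re h
  simp [zc] at this
lemma zc_slit (u : ℝ) : zc u ∈ Complex.slitPlane := Or.inl (by simp [zc])
lemma one_le_norm_zc (u : ℝ) : 1 ≤ ‖zc u‖ := by
  have := Complex.abs_re_le_norm (zc u)
  simpa [zc] using this
lemma norm_zc_le (u : ℝ) : ‖zc u‖ ≤ 1 + |u| := by
  calc ‖zc u‖ ≤ ‖(1:ℂ)‖ + ‖Complex.I * u‖ := norm_sub_le _ _
  _ = 1 + |u| := by simp

noncomputable def fc (x y u : ℝ) : ℂ :=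
  (1 / 12) * (zc u) ^ 3 - (1 / 2) * ((x : ℂ) + y) * (zc u)
    - (1 / 4) * ((x : ℂ) - y) ^ 2 / (zc u)

lemma fc_re (x y u : ℝ) :
    (fc x y u).re = (1 - 3*u^2)/12 - (x+y)/2 - (x-y)^2/(4*(1+u^2)) := by
  have h : Complex.normSq (zc u) = 1 + u^2 := by simp [zc, Complex.normSq_apply]; ring
  have h2 : (1:ℝ) + u^2 ≠ 0 := by positivity
  simp [fc, zc, Complex.div_re, Complex.normSq_apply, pow_succ]
  field_simp
  ring

lemma fc_re_le (x y u : ℝ) :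
    (fc x y u).re ≤ 1/12 + (|x| + |y|)/2 - u^2/4 := by
  rw [fc_re]
  have h1 : (0:ℝ) < 1 + u^2 := by positivity
  have h2 : (0:ℝ) ≤ (x-y)^2/(4*(1+u^2)) := by positivity
  have h3 : -(x+y)/2 ≤ (|x| + |y|)/2 := by
    have := abs_add_le x y
    have hx := neg_abs_le (x+y)
    linarith [abs_add_le x y, neg_abs_le (x+y)]
  nlinarith [abs_add_le x y, neg_abs_le (x+y)]

noncomputable def Gc (α x y : ℝ) (u : ℝ) : ℂ :=
  Complex.exp (fc x y u) / (zc u) ^ ((α : ℂ) + 1 / 2)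

lemma one_le_norm_zc_cpow (α : ℝ) (hα : 0 < α) (u : ℝ) :
    1 ≤ ‖(zc u) ^ ((α : ℂ) + 1 / 2)‖ := by
  have h := Complex.norm_cpow_of_ne_zero (zc_ne u) ((α : ℂ) + 1 / 2)
  have him : ((α : ℂ) + 1 / 2).im = 0 := by simp
  have hre : ((α : ℂ) + 1 / 2).re = α + 1/2 := by simp
  rw [h, him, hre]
  rw [mul_zero, Real.exp_zero, div_one]
  calc (1:ℝ) = 1 ^ (α + 1/2) := (Real.one_rpow _).symm
  _ ≤ ‖zc u‖ ^ (α + 1/2) :=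
      Real.rpow_le_rpow zero_le_one (one_le_norm_zc u) (by linarith)

lemma norm_Gc_le (α : ℝ) (hα : 0 < α) (x y u : ℝ) :
    ‖Gc α x y u‖ ≤ Real.exp (1/12 + (|x| + |y|)/2 - u^2/4) := by
  rw [Gc, norm_div]
  have h1 := one_le_norm_zc_cpow α hα u
  have h2 : ‖Complex.exp (fc x y u)‖ = Real.exp ((fc x y u).re) := by
    rw [Complex.norm_exp]
  calc ‖Complex.exp (fc x y u)‖ / ‖(zc u) ^ ((α : ℂ) + 1 / 2)‖
      ≤ ‖Complex.exp (fc x y u)‖ / 1 := by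
        apply div_le_div_of_nonneg_left (norm_nonneg _) one_pos h1
  _ = Real.exp ((fc x y u).re) := by rw [div_one, h2]
  _ ≤ _ := Real.exp_le_exp.2 (fc_re_le x y u)

lemma continuous_Gc (α x y : ℝ) : Continuous (Gc α x y) := by
  have hz : Continuous zc := by
    unfold zc; continuity
  have hfc : Continuous (fc x y) := by
    apply Continuous.sub
    · apply Continuous.sub
      · exact (continuous_const.mul (hz.pow 3))
      · exact (continuous_const.mul hz)
    · exact Continuous.div continuous_const hz (fun u => zc_ne u)
  apply Continuous.div
  · exact hfc.cexp
  · exact hz.cpow continuous_const (fun u => zc_slit u)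
  · intro u
    simp only [ne_eq, Complex.cpow_eq_zero_iff, not_and_or, not_not]
    exact Or.inl (zc_ne u)

lemma Gc_symm (α x y : ℝ) (u : ℝ) : Gc α x y u = Gc α y x u := by
  unfold Gc fc
  ring_nf

lemma integrable_exp_bound (c : ℝ) (b : ℝ) (hb : 0 < b) :
    MeasureTheory.Integrable (fun u : ℝ => Real.exp (c - b * u^2)) := by
  simpa [Real.exp_sub, sub_eq_add_neg, mul_comm, div_eq_mul_inv, Real.exp_add, neg_mul]
    using (integrable_exp_neg_mul_sq hb).const_mul (Real.exp c)

lemma integrable_Gc (α : ℝ) (hα : 0 < α) (x y : ℝ) :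
    MeasureTheory.Integrable (Gc α x y) := by
  apply MeasureTheory.Integrable.mono'
    (g := fun u => Real.exp ((1/12 + (|x| + |y|)/2) - (1/4) * u^2))
  · simpa using integrable_exp_bound (1/12 + (|x| + |y|)/2) (1/4) (by norm_num)
  · exact (continuous_Gc α x y).aestronglyMeasurable
  · filter_upwards with u
    have := norm_Gc_le α hα x y u
    calc ‖Gc α x y u‖ ≤ Real.exp (1/12 + (|x| + |y|)/2 - u^2/4) := this
    _ = Real.exp ((1/12 + (|x| + |y|)/2) - (1/4) * u^2) := by ring_nf

noncomputable def dGm (x y : ℝ) (u : ℝ) : ℂ :=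
  -(1/2) * (zc u) + (1/2) * ((x : ℂ) - y) / (zc u)

lemma hasDerivAt_fc (x y u : ℝ) :
    HasDerivAt (fun y' : ℝ => fc x y' u) (dGm x y u) y := by
  have h1 : HasDerivAt (fun y' : ℝ => ((y' : ℂ))) 1 y := by
    simpa using! Complex.ofRealCLM.hasDerivAt (x := y)
  have h2 : HasDerivAt (fun y' : ℝ => ((x : ℂ) + y')) 1 y := by
    simpa using h1.const_add (x : ℂ)
  have h3 : HasDerivAt (fun y' : ℝ => ((x : ℂ) - y')) (-1) y := by
    simpa using h1.const_sub (x : ℂ)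
  have h4 : HasDerivAt (fun y' : ℝ => ((x : ℂ) - y')^2) (2 * ((x:ℂ) - y) * (-1)) y := by
    have h := h3.mul h3
    have he : (fun y' : ℝ => ((x:ℂ) - y')^2) = (fun y' : ℝ => ((x:ℂ) - y') * ((x:ℂ) - y')) := by
      funext t; ring
    rw [he]
    exact h.congr_deriv (by ring)
  have h5 : HasDerivAt (fun y' : ℝ => (1/2 : ℂ) * ((x : ℂ) + y') * (zc u))
      ((1/2 : ℂ) * (zc u)) y := by
    have := (h2.const_mul (1/2 : ℂ)).mul_const (zc u)
    simpa using this
  have h6 : HasDerivAt (fun y' : ℝ => (1/4 : ℂ) * ((x : ℂ) - y')^2 / (zc u))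
      ((1/4 : ℂ) * (2 * ((x:ℂ) - y) * (-1)) / (zc u)) y := by
    exact (h4.const_mul (1/4 : ℂ)).div_const (zc u)
  have h7 := ((hasDerivAt_const y ((1/12 : ℂ) * (zc u)^3)).sub h5).sub h6
  refine h7.congr_deriv ?_
  have hz := zc_ne u
  unfold dGm
  field_simp
  ring

lemma hasDerivAt_Gc (α x y u : ℝ) :
    HasDerivAt (fun y' : ℝ => Gc α x y' u) (dGm x y u * Gc α x y u) y := by
  have h1 : HasDerivAt (fun y' : ℝ => Complex.exp (fc x y' u))
      (Complex.exp (fc x y u) * dGm x y u) y :=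
    HasDerivAt.cexp (f := fun y' : ℝ => fc x y' u) (hasDerivAt_fc x y u)
  have h2 := h1.div_const ((zc u) ^ ((α : ℂ) + 1 / 2))
  refine h2.congr_deriv ?_
  unfold Gc
  ring

lemma abs_mul_exp_le (u : ℝ) : |u| * Real.exp (-(1/8) * u^2) ≤ 2 := by
  have h1 : |u| ≤ 2 * Real.exp ((1/8) * u^2) := by
    nlinarith [Real.add_one_le_exp ((1/8) * u^2), _root_.sq_abs u, sq_nonneg (|u| - 2),
      Real.exp_pos ((1/8) * u^2)]
  calc |u| * Real.exp (-(1/8) * u^2)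
      ≤ (2 * Real.exp ((1/8) * u^2)) * Real.exp (-(1/8) * u^2) :=
        mul_le_mul_of_nonneg_right h1 (Real.exp_nonneg _)
  _ = 2 := by rw [mul_assoc, ← Real.exp_add]; norm_num

lemma norm_dGm_le (x y' u : ℝ) :
    ‖dGm x y' u‖ ≤ (1 + |u|)/2 + |x - y'|/2 := by
  unfold dGm
  have hzpos : 0 < ‖zc u‖ := lt_of_lt_of_le one_pos (one_le_norm_zc u)
  have h1 : ‖-(1/2 : ℂ) * (zc u)‖ = 1/2 * ‖zc u‖ := by
    rw [norm_mul]; norm_num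
  have hxy : ((x:ℂ) - y') = ((x - y' : ℝ) : ℂ) := by push_cast; ring
  have h2 : ‖(1/2 : ℂ) * ((x : ℂ) - y') / (zc u)‖ = 1/2 * |x - y'| / ‖zc u‖ := by
    rw [norm_div, norm_mul, hxy, Complex.norm_real]
    norm_num
  have h3 : 1/2 * |x - y'| / ‖zc u‖ ≤ 1/2 * |x - y'| := by
    apply div_le_self (by positivity) (one_le_norm_zc u)
  calc ‖-(1/2 : ℂ) * (zc u) + (1/2 : ℂ) * ((x : ℂ) - y') / (zc u)‖
      ≤ ‖-(1/2 : ℂ) * (zc u)‖ + ‖(1/2 : ℂ) * ((x : ℂ) - y') / (zc u)‖ := norm_add_le _ _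
  _ ≤ 1/2 * ‖zc u‖ + 1/2 * |x - y'| := by rw [h1, h2]; linarith
  _ ≤ (1 + |u|)/2 + |x - y'|/2 := by
      have := norm_zc_le u; linarith

lemma norm_dGm_mul_Gc_le (α : ℝ) (hα : 0 < α) (x y u y' : ℝ) (hy' : |y' - y| ≤ 1) :
    ‖dGm x y' u * Gc α x y' u‖ ≤
      (|x| + |y| + 4) * Real.exp (1/12 + (|x| + |y| + 1)/2) * Real.exp (-(1/8) * u^2) := by
  have hy'abs : |y'| ≤ |y| + 1 := by
    have : |y'| ≤ |y' - y| + |y| := by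
      have := abs_add_le (y' - y) y; simpa using this
    linarith
  have hxy' : |x - y'| ≤ |x| + |y| + 1 := by
    have := abs_sub x y'; linarith [abs_sub x y']
  have hd : ‖dGm x y' u‖ ≤ (1 + |u|)/2 + (|x| + |y| + 1)/2 := by
    have := norm_dGm_le x y' u; linarith
  have hg : ‖Gc α x y' u‖ ≤ Real.exp (1/12 + (|x| + |y| + 1)/2 - u^2/4) := by
    refine (norm_Gc_le α hα x y' u).trans (Real.exp_le_exp.2 ?_)
    linarith
  have hE1 : Real.exp (-(1/8) * u^2) ≤ 1 := Real.exp_le_one_iff.2 (by nlinarith [sq_nonneg u])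
  have hE0 : (0:ℝ) < Real.exp (-(1/8) * u^2) := Real.exp_pos _
  have hEu := abs_mul_exp_le u
  have hx0 : (0:ℝ) ≤ |x| := abs_nonneg x
  have hy0 : (0:ℝ) ≤ |y| := abs_nonneg y
  have hu0 : (0:ℝ) ≤ |u| := abs_nonneg u
  have hsplit : Real.exp (1/12 + (|x| + |y| + 1)/2 - u^2/4)
      = Real.exp (1/12 + (|x| + |y| + 1)/2) * Real.exp (-(1/8) * u^2) * Real.exp (-(1/8) * u^2) := by
    rw [← Real.exp_add, ← Real.exp_add]; ring_nf
  have key : ((1 + |u|)/2 + (|x| + |y| + 1)/2) * Real.exp (-(1/8) * u^2) ≤ |x| + |y| + 4 := by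
    nlinarith [mul_le_mul_of_nonneg_left hE1 (show (0:ℝ) ≤ (2 + |x| + |y|)/2 by linarith)]
  rw [norm_mul]
  calc ‖dGm x y' u‖ * ‖Gc α x y' u‖
      ≤ ((1 + |u|)/2 + (|x| + |y| + 1)/2) *
        (Real.exp (1/12 + (|x| + |y| + 1)/2) * Real.exp (-(1/8) * u^2) * Real.exp (-(1/8) * u^2)) := by
        apply mul_le_mul hd (hg.trans_eq hsplit) (norm_nonneg _) (by positivity)
  _ = (((1 + |u|)/2 + (|x| + |y| + 1)/2) * Real.exp (-(1/8) * u^2)) *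
        (Real.exp (1/12 + (|x| + |y| + 1)/2) * Real.exp (-(1/8) * u^2)) := by ring
  _ ≤ (|x| + |y| + 4) * (Real.exp (1/12 + (|x| + |y| + 1)/2) * Real.exp (-(1/8) * u^2)) :=
      mul_le_mul_of_nonneg_right key (by positivity)
  _ = (|x| + |y| + 4) * Real.exp (1/12 + (|x| + |y| + 1)/2) * Real.exp (-(1/8) * u^2) := by ring

lemma continuous_zc : Continuous zc := by unfold zc; continuity

lemma continuous_dGm (x y : ℝ) : Continuous (dGm x y) := by
  unfold dGm
  exact (continuous_const.mul continuous_zc).add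
    (Continuous.div continuous_const continuous_zc (fun u => zc_ne u))

open MeasureTheory in
lemma hasDerivAt_int (α : ℝ) (hα : 0 < α) (x y : ℝ) :
    Integrable (fun u : ℝ => dGm x y u * Gc α x y u) ∧
    HasDerivAt (fun y' : ℝ => ∫ u : ℝ, Gc α x y' u) (∫ u : ℝ, dGm x y u * Gc α x y u) y := by
  have h := hasDerivAt_integral_of_dominated_loc_of_deriv_le (μ := MeasureTheory.volume)
    (F := fun (y' : ℝ) (u : ℝ) => Gc α x y' u)
    (F' := fun (y' : ℝ) (u : ℝ) => dGm x y' u * Gc α x y' u)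
    (x₀ := y)
    (bound := fun u => (|x| + |y| + 4) * Real.exp (1/12 + (|x| + |y| + 1)/2)
      * Real.exp (-(1/8) * u^2))
    (Metric.ball_mem_nhds y one_pos)
    (Filter.Eventually.of_forall fun y' => (continuous_Gc α x y').aestronglyMeasurable)
    (integrable_Gc α hα x y)
    (((continuous_dGm x y).mul (continuous_Gc α x y)).aestronglyMeasurable)
    (Filter.Eventually.of_forall fun u => by
      intro y' hy'
      have : |y' - y| ≤ 1 := by
        rw [Metric.mem_ball, Real.dist_eq] at hy'
        exact le_of_lt hy'
      exact norm_dGm_mul_Gc_le α hα x y u y' this)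
    (by
      have := (integrable_exp_neg_mul_sq (show (0:ℝ) < 1/8 by norm_num)).const_mul
        ((|x| + |y| + 4) * Real.exp (1/12 + (|x| + |y| + 1)/2))
      simpa [neg_mul, mul_assoc] using this)
    (Filter.Eventually.of_forall fun u => by
      intro y' _
      exact hasDerivAt_Gc α x y' u)
  exact h

lemma Gc_div (α x y : ℝ) (u : ℝ) : Gc α x y u / zc u = Gc (α + 1) x y u := by
  unfold Gc
  rw [div_div]
  congr 1
  have h : zc u ^ (((α + 1 : ℝ) : ℂ) + 1/2) = zc u ^ ((α : ℂ) + 1/2) * zc u := by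
    rw [show (((α + 1 : ℝ) : ℂ) + 1/2) = ((α : ℂ) + 1/2) + 1 by push_cast; ring,
      Complex.cpow_add _ _ (zc_ne u), Complex.cpow_one]
  rw [h]

lemma Ifun_eq (α x y : ℝ) :
    Ifun α x y = (1 / (4 * (Real.pi : ℂ) ^ ((3 : ℂ) / 2))) * ∫ u : ℝ, Gc α x y u := rfl

open MeasureTheory in
theorem Ifun_step' (α : ℝ) (hα : 0 < α) (x y : ℝ) (hxy : x ≠ y) :
    (((1 / (x - y) : ℝ)) : ℂ) *
        (deriv (fun y' : ℝ => Ifun α x y') y - deriv (fun x' : ℝ => Ifun α x' y) x)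
      = Ifun (α + 1) x y := by
  set c : ℂ := 1 / (4 * (Real.pi : ℂ) ^ ((3 : ℂ) / 2)) with hc
  have hy := hasDerivAt_int α hα x y
  have hx := hasDerivAt_int α hα y x
  have hdy : deriv (fun y' : ℝ => Ifun α x y') y = c * ∫ u : ℝ, dGm x y u * Gc α x y u :=
    ((hy.2).const_mul c).deriv
  have hfunext : (fun x' : ℝ => Ifun α x' y) = fun x' : ℝ => c * ∫ u : ℝ, Gc α y x' u := by
    funext x'
    rw [Ifun_eq]
    congr 1
    exact integral_congr_ae (Filter.Eventually.of_forall fun u => Gc_symm α x' y u)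
  have hdx : deriv (fun x' : ℝ => Ifun α x' y) x = c * ∫ u : ℝ, dGm y x u * Gc α y x u := by
    rw [hfunext]
    exact ((hx.2).const_mul c).deriv
  rw [hdy, hdx]
  have hint1 : Integrable (fun u : ℝ => dGm x y u * Gc α x y u) := hy.1
  have hint2 : Integrable (fun u : ℝ => dGm y x u * Gc α y x u) := hx.1
  have hsub : (∫ u : ℝ, dGm x y u * Gc α x y u) - ∫ u : ℝ, dGm y x u * Gc α y x u
      = ∫ u : ℝ, (dGm x y u * Gc α x y u - dGm y x u * Gc α y x u) :=
    (integral_sub hint1 hint2).symm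
  have hxyc : ((x : ℂ) - y) ≠ 0 := by
    rw [sub_ne_zero]
    exact_mod_cast fun h => hxy (by exact_mod_cast h)
  have hpt : ∀ u : ℝ, (((1 / (x - y) : ℝ)) : ℂ) *
      (dGm x y u * Gc α x y u - dGm y x u * Gc α y x u) = Gc (α + 1) x y u := by
    intro u
    rw [← Gc_symm α x y u, ← Gc_div α x y u]
    have hdiff : dGm x y u - dGm y x u = ((x : ℂ) - y) / zc u := by
      unfold dGm
      field_simp
      ring
    have hw : (((1 / (x - y) : ℝ)) : ℂ) = 1 / ((x : ℂ) - y) := by push_cast; ring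
    rw [show dGm x y u * Gc α x y u - dGm y x u * Gc α x y u
        = (dGm x y u - dGm y x u) * Gc α x y u by ring, hdiff, hw]
    field_simp
  calc (((1 / (x - y) : ℝ)) : ℂ) *
        (c * (∫ u : ℝ, dGm x y u * Gc α x y u) - c * ∫ u : ℝ, dGm y x u * Gc α y x u)
      = c * ((((1 / (x - y) : ℝ)) : ℂ) *
          ((∫ u : ℝ, dGm x y u * Gc α x y u) - ∫ u : ℝ, dGm y x u * Gc α y x u)) := by ring
  _ = c * ((((1 / (x - y) : ℝ)) : ℂ) *
        ∫ u : ℝ, (dGm x y u * Gc α x y u - dGm y x u * Gc α y x u)) := by rw [hsub]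
  _ = c * ∫ u : ℝ, (((1 / (x - y) : ℝ)) : ℂ) *
        (dGm x y u * Gc α x y u - dGm y x u * Gc α y x u) := by
      rw [integral_const_mul]
  _ = c * ∫ u : ℝ, Gc (α + 1) x y u := by
      congr 1
      exact integral_congr_ae (Filter.Eventually.of_forall fun u => hpt u)
  _ = Ifun (α + 1) x y := (Ifun_eq (α + 1) x y).symm

/-- For `α > 0` and `x ≠ y`, `(1/(x−y))·(∂/∂y − ∂/∂x) I^{(α)}(x,y) = I^{(α+1)}(x,y)`. -/
theorem Ifun_step (α : ℝ) (hα : 0 < α) (x y : ℝ) (hxy : x ≠ y) :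
    (((1 / (x - y) : ℝ)) : ℂ) *
        (deriv (fun y' : ℝ => Ifun α x y') y - deriv (fun x' : ℝ => Ifun α x' y) x)
      = Ifun (α + 1) x y :=
  Ifun_step' α hα x y hxy
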